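/- Let N ≥ 1 be an integer. There exist a monotone set-valued operator A : ℝ² → Set ℝ² with 0 ∈ A(0) and points w^0, w^1, …, w^{N+1} ∈ ℝ² such that ‖w^0‖ = 1, w^k − w^{k+1} ∈ A(w^{k+1}) for all k = 0, …, N, and ‖w^N − w^{N+1}‖² = N^N/(N+1)^{N+1}. Consequently, the worst-case bound N^N/(N+1)^{N+1} = 1/((1+1/N)^N (N+1)) for the squared fixed-point residual of the proximal point algorithm with unit parameter and unit initial distance to a zero is attained, hence cannot be improved. -/

import Mathlib

open scoped RealInnerProductSpace

/-- Tightness of the optimal bound: there is a monotone operator `A` on `ℝ²` with `0 ∈ A 0`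
and proximal point iterates `w⁰, …, w^{N+1}` (unit parameter) with `‖w⁰‖ = 1` whose
squared fixed-point residual equals `N^N/(N+1)^{N+1}`. -/
theorem ppa_optimal_rate_attained (N : ℕ) (hN : 1 ≤ N) :
    ∃ (A : EuclideanSpace ℝ (Fin 2) → Set (EuclideanSpace ℝ (Fin 2)))
      (w : ℕ → EuclideanSpace ℝ (Fin 2)),
      (∀ x y u v, u ∈ A x → v ∈ A y → 0 ≤ ⟪u - v, x - y⟫) ∧
      (0 : EuclideanSpace ℝ (Fin 2)) ∈ A 0 ∧
      ‖w 0‖ = 1 ∧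
      (∀ k ≤ N, w k - w (k + 1) ∈ A (w (k + 1))) ∧
      ‖w N - w (N + 1)‖ ^ 2 = (N : ℝ) ^ N / ((N : ℝ) + 1) ^ (N + 1) := by
  set e : ℂ ≃ₗᵢ[ℝ] EuclideanSpace ℝ (Fin 2) :=
    Complex.isometryOfOrthonormal (EuclideanSpace.basisFun (Fin 2) ℝ) with he
  have hNpos : (0 : ℝ) < N := by exact_mod_cast hN
  set c : ℝ := Real.sqrt (1 / N) with hc
  have hc2 : c ^ 2 = 1 / N := Real.sq_sqrt (by positivity)
  set ζ : ℂ := 1 + (c : ℂ) * Complex.I with hζ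
  have hζne : ζ ≠ 0 := by
    intro h
    have : (ζ).re = 0 := by rw [h]; simp
    simp [hζ] at this
  set z : ℂ := ζ⁻¹ with hz
  have hzζ : z * ζ = 1 := inv_mul_cancel₀ hζne
  -- key algebraic identity : z^k - z^(k+1) = c*I*z^(k+1)
  have hkey : ∀ k : ℕ, z ^ k - z ^ (k + 1) = (c : ℂ) * Complex.I * z ^ (k + 1) := by
    intro k
    have h1 : z ^ k = z ^ (k + 1) * ζ := by
      rw [pow_succ, mul_assoc, hzζ, mul_one]
    rw [h1, hζ]; ring
  refine ⟨fun x => {e ((c : ℂ) * Complex.I * e.symm x)}, fun k => e (z ^ k), ?_, ?_, ?_, ?_, ?_⟩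
  · intro x y u v hu hv
    simp only [Set.mem_singleton_iff] at hu hv
    subst hu hv
    have hxy : x - y = e (e.symm x - e.symm y) := by simp [map_sub]
    rw [← map_sub, ← mul_sub, hxy, e.inner_map_map, Complex.inner]
    set d := e.symm x - e.symm y
    have : (d * (starRingEnd ℂ) ((c : ℂ) * Complex.I * d)).re = 0 := by
      simp [Complex.mul_re, Complex.mul_im]
      ring
    rw [this]
  · simp
  · simp
  · intro k _
    simp only [Set.mem_singleton_iff, ← map_sub, LinearIsometryEquiv.symm_apply_apply]
    congr 1
    exact hkey k
  · rw [← map_sub, e.norm_map, hkey N]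
    have hnormz : ‖z‖ ^ 2 = (N : ℝ) / (N + 1) := by
      rw [hz, norm_inv, inv_pow, Complex.sq_norm, hζ]
      have : Complex.normSq (1 + (c:ℂ) * Complex.I) = 1 + c ^ 2 := by
        simp [Complex.normSq_apply, sq]
      rw [this, hc2]
      field_simp
    have habs : ‖(c : ℂ) * Complex.I * z ^ (N + 1)‖ ^ 2
        = c ^ 2 * (‖z‖ ^ 2) ^ (N + 1) := by
      have h1 : ‖(c : ℂ) * Complex.I * z ^ (N + 1)‖
          = |c| * ‖z‖ ^ (N + 1) := by
        simp [map_mul]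
      rw [h1, mul_pow, sq_abs, pow_right_comm]
    rw [habs, hnormz, hc2]
    rw [div_pow]
    field_simp
    ring
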